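/- Let F be a finite set and k ∈ ℕ, and let g, h : Fin k → Set F be functions such that g is antitone (i < j implies g(j) ⊆ g(i)), h is monotone (i < j implies h(i) ⊆ h(j)), and for all i < j with (g(i),h(i)) ≠ (g(j),h(j)), either g(j) ⊊ g(i) or h(i) ⊊ h(j). Then the number of distinct pairs (g(i),h(i)), i ∈ Fin k, is at most 2·|F| + 1. -/
import Mathlib


/-- Combinatorial core of the bound on distinct matched pairs of clusters in a
stripe expression: if `g` is antitone, `h` is monotone, and any change of the pair
`(g i, h i)` forces a strict decrease of `g` or a strict increase of `h`, then the
number of distinct pairs is at most `2·|F| + 1`. -/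
theorem distinct_pairs_bound (F : Type*) [Fintype F] (k : ℕ)
    (g h : Fin k → Set F)
    (hg : ∀ i j : Fin k, i < j → g j ⊆ g i)
    (hh : ∀ i j : Fin k, i < j → h i ⊆ h j)
    (hchange : ∀ i j : Fin k, i < j → (g i, h i) ≠ (g j, h j) →
        g j ⊂ g i ∨ h i ⊂ h j) :
    Set.ncard {p : Set F × Set F | ∃ i : Fin k, (g i, h i) = p} ≤
      2 * Fintype.card F + 1 := by
  set S : Set (Set F × Set F) := {p : Set F × Set F | ∃ i : Fin k, (g i, h i) = p} with hS
  have hSrange : S = Set.range (fun i : Fin k => (g i, h i)) := by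
    ext p; simp [hS, Set.range, eq_comm]
  have hfin : S.Finite := by rw [hSrange]; exact Set.finite_range _
  set f : Set F × Set F → ℕ := fun p => p.1.ncard + (Fintype.card F - p.2.ncard) with hf
  -- key: strict decrease of f along changes
  have key : ∀ i j : Fin k, i < j → (g i, h i) ≠ (g j, h j) →
      f (g j, h j) < f (g i, h i) := by
    intro i j hij hne
    have hgn : (g j).ncard ≤ (g i).ncard :=
      Set.ncard_le_ncard (hg i j hij) (Set.toFinite _)
    have hhn : (h i).ncard ≤ (h j).ncard :=
      Set.ncard_le_ncard (hh i j hij) (Set.toFinite _)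
    have hhF : (h j).ncard ≤ Fintype.card F := by
      simpa [Set.ncard_univ, Nat.card_eq_fintype_card] using
        Set.ncard_le_ncard (Set.subset_univ (h j)) (Set.toFinite _)
    rcases hchange i j hij hne with hc | hc
    · have : (g j).ncard < (g i).ncard := Set.ncard_lt_ncard hc (Set.toFinite _)
      simp only [hf]; omega
    · have : (h i).ncard < (h j).ncard := Set.ncard_lt_ncard hc (Set.toFinite _)
      simp only [hf]; omega
  have hinj : Set.InjOn f S := by
    intro p hp q hq hpq
    obtain ⟨i, hi⟩ := hp
    obtain ⟨j, hj⟩ := hq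
    by_contra hne
    rcases lt_trichotomy i j with hij | hij | hij
    · have : (g i, h i) ≠ (g j, h j) := by rw [hi, hj]; exact hne
      have := key i j hij this
      rw [hi, hj] at this; omega
    · rw [hij] at hi; exact hne (hi.symm.trans hj)
    · have : (g j, h j) ≠ (g i, h i) := by rw [hi, hj]; exact (Ne.symm hne)
      have := key j i hij this
      rw [hi, hj] at this; omega
  calc S.ncard = (f '' S).ncard := (Set.ncard_image_of_injOn hinj).symm
    _ ≤ (↑(Finset.range (2 * Fintype.card F + 1)) : Set ℕ).ncard := by
        apply Set.ncard_le_ncard _ (Set.toFinite _)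
        rintro n ⟨p, hp, rfl⟩
        obtain ⟨i, hi⟩ := hp
        have h1 : p.1.ncard ≤ Fintype.card F := by
          simpa [Set.ncard_univ, Nat.card_eq_fintype_card] using
            Set.ncard_le_ncard (Set.subset_univ p.1) (Set.toFinite _)
        simp only [Finset.coe_range, Set.mem_Iio, hf]
        omega
    _ = 2 * Fintype.card F + 1 := by rw [Set.ncard_coe_finset, Finset.card_range]
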